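/- Let M be an (m+n)×(m+n) real matrix. There exists an invertible (m+n)×(m+n) matrix T and an n×n matrix H such that T M equals the block diagonal matrix [[I_m, 0], [0, H]] if and only if every vector in the kernel of M has vanishing first block, i.e. ker M ⊆ {0} × ℝ^n. -/

import Mathlib

open Matrix

lemma factor_through {K V W : Type*} [Field K] [AddCommGroup V] [Module K V]
    [AddCommGroup W] [Module K W] (f : V →ₗ[K] W) (φ : V →ₗ[K] K)
    (h : LinearMap.ker f ≤ LinearMap.ker φ) : ∃ ψ : W →ₗ[K] K, ∀ x, ψ (f x) = φ x := by
  obtain ⟨ψ, hψ⟩ := LinearMap.exists_extend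
    (((LinearMap.ker f).liftQ φ h) ∘ₗ (f.quotKerEquivRange).symm.toLinearMap)
  refine ⟨ψ, fun x => ?_⟩
  have h2 := congrFun (congrArg (fun g => g.toFun) hψ) ⟨f x, LinearMap.mem_range_self f x⟩
  have h3 : ψ (f x) = ((LinearMap.ker f).liftQ φ h)
      ((f.quotKerEquivRange).symm ⟨f x, LinearMap.mem_range_self f x⟩) := h2
  rw [h3, LinearMap.quotKerEquivRange_symm_apply_image]
  simp


/-- 1-fullness characterization: there exist an invertible `T` and a matrix `H`
with `T M = [[I, 0], [0, H]]` iff every kernel vector of `M` has vanishing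
first block. -/
theorem stmt10 (m n : ℕ) (M : Matrix (Fin m ⊕ Fin n) (Fin m ⊕ Fin n) ℝ) :
    (∃ T : Matrix (Fin m ⊕ Fin n) (Fin m ⊕ Fin n) ℝ, IsUnit T ∧
        ∃ H : Matrix (Fin n) (Fin n) ℝ, T * M = Matrix.fromBlocks 1 0 0 H) ↔
    (∀ y : Fin m ⊕ Fin n → ℝ, M.mulVec y = 0 → ∀ i : Fin m, y (Sum.inl i) = 0) := by
  constructor
  · rintro ⟨T, hT, H, hTM⟩ y hy i
    have h1 : (T * M).mulVec y = 0 := by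
      rw [← Matrix.mulVec_mulVec, hy, Matrix.mulVec_zero]
    rw [hTM] at h1
    have h2 := congrFun h1 (Sum.inl i)
    simpa [Matrix.mulVec, dotProduct, Fintype.sum_sum_type, Matrix.fromBlocks,
      Matrix.one_apply] using h2
  · intro hk
    classical
    -- factor each coordinate functional through M
    have hψ : ∀ i : Fin m, ∃ ψ : (Fin m ⊕ Fin n → ℝ) →ₗ[ℝ] ℝ,
        ∀ x, ψ (M.mulVec x) = x (Sum.inl i) := by
      intro i
      refine factor_through M.mulVecLin (LinearMap.proj (Sum.inl i)) ?_
      intro y hy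
      simp only [LinearMap.mem_ker, Matrix.mulVecLin_apply] at hy
      exact hk y hy i
    choose ψ hψ using hψ
    set a : Fin m → (Fin m ⊕ Fin n → ℝ) := fun i k => ψ i (Pi.single k 1) with ha
    have hrow : ∀ (i : Fin m) (w : Fin m ⊕ Fin n → ℝ), ψ i w = ∑ k, w k * a i k := by
      intro i w
      have hw : w = ∑ k, Pi.single k (w k) := by
        funext k; simp [Finset.sum_apply, Pi.single_apply]
      conv_lhs => rw [hw]
      rw [map_sum]
      congr 1; funext k
      have h2 : Pi.single k (w k) = w k • (Pi.single k (1:ℝ) : Fin m ⊕ Fin n → ℝ) := by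
        funext l; by_cases h : l = k <;> simp [Pi.single_apply, h]
      rw [h2, _root_.map_smul]; simp [ha, mul_comm]
    have hkey : ∀ (i : Fin m) (c : Fin m ⊕ Fin n),
        ∑ k, a i k * M k c = if c = Sum.inl i then 1 else 0 := by
      intro i c
      have h1 : M.mulVec (Pi.single c 1) = fun k => M k c := by
        funext k; simp [Matrix.mulVec_single]
      have := hψ i (Pi.single c 1)
      rw [h1, hrow i] at this
      rw [show (∑ k, a i k * M k c) = ∑ k, M k c * a i k by simp [mul_comm], this]
      simp [Pi.single_apply, eq_comm]
    -- a is linearly independent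
    have hli : LinearIndependent ℝ a := by
      rw [Fintype.linearIndependent_iff]
      intro g hg j
      have h0 : ∀ k, (∑ i, g i * a i k) = 0 := by
        intro k
        have := congrFun hg k
        simpa [Finset.sum_apply] using this
      have hs : ∑ k, (∑ i, g i * a i k) * M k (Sum.inl j)
          = ∑ i, g i * (∑ k, a i k * M k (Sum.inl j)) := by
        simp_rw [Finset.sum_mul, mul_assoc]
        rw [Finset.sum_comm]
        simp_rw [← Finset.mul_sum]
      have : (0:ℝ) = g j := by
        have := hs
        simp only [h0, zero_mul, Finset.sum_const_zero] at this
        rw [this]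
        simp [hkey]
      exact this.symm
    -- extend to a basis via a complement
    obtain ⟨Wc, hWc⟩ := Submodule.exists_isCompl (Submodule.span ℝ (Set.range a))
    have hfr : Module.finrank ℝ Wc = n := by
      have h1 := Submodule.finrank_add_eq_of_isCompl hWc
      have h2 : Module.finrank ℝ (Submodule.span ℝ (Set.range a)) = m := by
        rw [finrank_span_eq_card hli]; simp
      have h3 : Module.finrank ℝ (Fin m ⊕ Fin n → ℝ) = m + n := by
        simp [Module.finrank_pi]
      omega
    let c : Module.Basis (Fin n) ℝ Wc := Module.finBasisOfFinrankEq ℝ Wc hfr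
    set v : (Fin m ⊕ Fin n) → (Fin m ⊕ Fin n → ℝ) :=
      Sum.elim a (fun j => (c j : Fin m ⊕ Fin n → ℝ)) with hv
    have hspanc : Submodule.span ℝ (Set.range fun j => (c j : Fin m ⊕ Fin n → ℝ)) = Wc := by
      have : (Set.range fun j => (c j : Fin m ⊕ Fin n → ℝ))
          = Wc.subtype '' (Set.range c) := by
        rw [← Set.range_comp]; rfl
      rw [this, ← Submodule.map_span, c.span_eq, Submodule.map_top, Submodule.range_subtype]
    have hliv : LinearIndependent ℝ v := by
      refine hli.sum_type (c.linearIndependent.map' Wc.subtype Wc.ker_subtype) ?_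
      rw [hspanc]
      exact hWc.disjoint
    have hspanv : ⊤ ≤ Submodule.span ℝ (Set.range v) := by
      rw [hv, Set.Sum.elim_range, Submodule.span_union, hspanc, hWc.sup_eq_top]
    let bV : Module.Basis (Fin m ⊕ Fin n) ℝ (Fin m ⊕ Fin n → ℝ) := Module.Basis.mk hliv hspanv
    -- T₀ : rows are v
    set T₀ : Matrix (Fin m ⊕ Fin n) (Fin m ⊕ Fin n) ℝ := Matrix.of v with hT₀
    have hT₀unit : IsUnit T₀ := by
      have h1 : IsUnit ((Pi.basisFun ℝ (Fin m ⊕ Fin n)).toMatrix ⇑bV) := by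
        have := Module.Basis.invertibleToMatrix (Pi.basisFun ℝ (Fin m ⊕ Fin n)) bV
        exact isUnit_of_invertible _
      have h2 : (Pi.basisFun ℝ (Fin m ⊕ Fin n)).toMatrix ⇑bV = T₀ᵀ := by
        rw [show ((Pi.basisFun ℝ (Fin m ⊕ Fin n)).toMatrix ⇑bV)
            = Matrix.transpose (Matrix.of ⇑bV) from
          congrFun Module.Basis.coePiBasisFun.toMatrix_eq_transpose (Matrix.of ⇑bV)]
        ext k l
        simp [hT₀, bV, Module.Basis.coe_mk]
      rw [h2, Matrix.isUnit_iff_isUnit_det, Matrix.det_transpose,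
        ← Matrix.isUnit_iff_isUnit_det] at h1
      exact h1
    -- top blocks of T₀ * M
    have htop : ∀ (i : Fin m) (cc : Fin m ⊕ Fin n),
        (T₀ * M) (Sum.inl i) cc = if cc = Sum.inl i then 1 else 0 := by
      intro i cc
      rw [Matrix.mul_apply]
      exact hkey i cc
    set C := (T₀ * M).toBlocks₂₁ with hC
    set H := (T₀ * M).toBlocks₂₂ with hH
    have hb11 : (T₀ * M).toBlocks₁₁ = 1 := by
      ext i j
      simp only [Matrix.toBlocks₁₁, Matrix.of_apply, htop, Matrix.one_apply]
      by_cases h : i = j <;> simp [h, eq_comm]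
    have hb12 : (T₀ * M).toBlocks₁₂ = 0 := by
      ext i j
      simp [Matrix.toBlocks₁₂, htop]
    have hblocks : T₀ * M = Matrix.fromBlocks 1 0 C H := by
      conv_lhs => rw [← (T₀ * M).fromBlocks_toBlocks]
      rw [hb11, hb12]
    have hLunit : IsUnit (Matrix.fromBlocks (1 : Matrix (Fin m) (Fin m) ℝ) (0 : Matrix (Fin m) (Fin n) ℝ) (-C) (1 : Matrix (Fin n) (Fin n) ℝ)) := by
      have hmul : Matrix.fromBlocks (1 : Matrix (Fin m) (Fin m) ℝ) (0 : Matrix (Fin m) (Fin n) ℝ) (-C) (1 : Matrix (Fin n) (Fin n) ℝ) *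
          Matrix.fromBlocks 1 (0 : Matrix (Fin m) (Fin n) ℝ) C 1 = 1 := by
        rw [Matrix.fromBlocks_multiply]
        simp [Matrix.fromBlocks_one]
      have := invertibleOfRightInverse _ _ hmul
      exact isUnit_of_invertible _
    refine ⟨Matrix.fromBlocks 1 0 (-C) 1 * T₀, hLunit.mul hT₀unit, H, ?_⟩
    rw [Matrix.mul_assoc, hblocks, Matrix.fromBlocks_multiply]
    simp
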